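/- arXiv:2109.10426 — 3 statements merged into one kernel-verified Lean document; each statement's English description precedes it below -/
import Mathlib

section
/- Let ζ ∈ ℂ and σ ∈ ℝ. Then every z ∈ ℂ with z·exp(z) = ζ satisfies Re(z) < σ if and only if one of the following holds: (i) σ·e^σ > |ζ|; (ii) −|ζ| < σ·e^σ ≤ |ζ| and |Arg(ζ)| > arccos(σ·e^σ/|ζ|) + √(|ζ|²·e^{−2σ} − σ²). -/
open Real Set



private noncomputable def gfun (r t : ℝ) : ℝ :=
  Real.arccos (t * Real.exp t / r) + Real.sqrt (r ^ 2 * Real.exp (-2 * t) - t ^ 2)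

private lemma gfun_cont (r : ℝ) : Continuous (gfun r) := by
  unfold gfun
  apply Continuous.add
  · exact Real.continuous_arccos.comp ((continuous_id.mul Real.continuous_exp).div_const r)
  · exact Real.continuous_sqrt.comp (by continuity)

private lemma gfun_deriv {r t : ℝ} (hr : 0 < r) (ht : t ^ 2 < r ^ 2 * Real.exp (-2 * t)) :
    ∃ D, HasDerivAt (gfun r) D t ∧ D < 0 := by
  set V : ℝ := r ^ 2 * Real.exp (-2 * t) - t ^ 2 with hV
  have hVpos : 0 < V := by rw [hV]; linarith
  have hS : 0 < Real.sqrt V := Real.sqrt_pos.2 hVpos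
  have het : 0 < Real.exp t := Real.exp_pos t
  -- derivative of inner arccos argument
  have hu : HasDerivAt (fun t : ℝ => t * Real.exp t / r) ((1 + t) * Real.exp t / r) t := by
    have h := (hasDerivAt_id t).mul (Real.hasDerivAt_exp t)
    have := h.div_const r
    refine this.congr_deriv ?_
    simp; ring
  -- u in Ioo (-1) 1
  have hu2 : (t * Real.exp t / r) ^ 2 < 1 := by
    have hexp : Real.exp (-2 * t) = (Real.exp t)⁻¹ ^ 2 := by
      rw [← Real.exp_neg]; rw [← Real.exp_nat_mul]; ring_nf
    rw [div_pow, div_lt_one (by positivity)]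
    rw [hexp] at ht
    calc (t * Real.exp t) ^ 2 = t ^ 2 * (Real.exp t) ^ 2 := by ring
    _ < (r ^ 2 * (Real.exp t)⁻¹ ^ 2) * (Real.exp t) ^ 2 := by
          apply mul_lt_mul_of_pos_right ht (by positivity)
    _ = r ^ 2 := by field_simp
  have hune : t * Real.exp t / r ≠ -1 ∧ t * Real.exp t / r ≠ 1 := by
    constructor <;> intro h <;> rw [h] at hu2 <;> norm_num at hu2
  have harc := (Real.hasDerivAt_arccos hune.1 hune.2).comp t hu
  -- derivative of sqrt part
  have hv : HasDerivAt (fun t : ℝ => r ^ 2 * Real.exp (-2 * t) - t ^ 2)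
      (r ^ 2 * (Real.exp (-2 * t) * (-2)) - 2 * t) t := by
    have h1 : HasDerivAt (fun t : ℝ => Real.exp (-2 * t)) (Real.exp (-2 * t) * (-2)) t := by
      have := (Real.hasDerivAt_exp (-2 * t)).comp t ((hasDerivAt_id t).const_mul (-2))
      refine this.congr_deriv ?_
      simp [mul_comm]
    have := ((h1.const_mul (r ^ 2)).sub ((hasDerivAt_pow 2 t)))
    refine this.congr_deriv ?_
    push_cast; ring
  have hsq := (Real.hasDerivAt_sqrt (ne_of_gt hVpos)).comp t hv
  refine ⟨_, harc.add hsq, ?_⟩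
  -- simplify: sqrt (1 - u^2) = exp t * sqrt V / r
  have h1u : 1 - (t * Real.exp t / r) ^ 2 = (Real.exp t / r) ^ 2 * V := by
    have hexp : Real.exp (-2 * t) * (Real.exp t)^2 = 1 := by
      rw [← Real.exp_nat_mul, ← Real.exp_add]; norm_num
    field_simp
    nlinarith [hexp]
  have hsqrt1u : Real.sqrt (1 - (t * Real.exp t / r) ^ 2) = Real.exp t / r * Real.sqrt V := by
    rw [h1u, Real.sqrt_mul (sq_nonneg _), Real.sqrt_sq (by positivity)]
  rw [hsqrt1u]
  have hEt2 : t ^ 2 < r ^ 2 * Real.exp (-2*t) := ht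
  -- total derivative < 0
  have key : -(1 / (Real.exp t / r * Real.sqrt V)) * ((1 + t) * Real.exp t / r) +
      1 / (2 * Real.sqrt V) * (r ^ 2 * (Real.exp (-2 * t) * (-2)) - 2 * t) =
      -((1 + 2 * t + r ^ 2 * Real.exp (-2 * t)) / Real.sqrt V) := by
    field_simp
    ring
  rw [key]
  have hnum : 0 < 1 + 2 * t + r ^ 2 * Real.exp (-2 * t) := by nlinarith [sq_nonneg (1 + t)]
  exact neg_neg_iff_pos.mpr (div_pos hnum hS)



private lemma te_hasDeriv (t : ℝ) : HasDerivAt (fun t : ℝ => t * Real.exp t) ((1 + t) * Real.exp t) t := by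
  have h := (hasDerivAt_id t).mul (Real.hasDerivAt_exp t)
  refine h.congr_deriv ?_
  simp; ring

private lemma te_mono : StrictMonoOn (fun t : ℝ => t * Real.exp t) (Set.Ici (-1)) := by
  apply strictMonoOn_of_deriv_pos (convex_Ici _)
  · exact (continuous_id.mul Real.continuous_exp).continuousOn
  · intro t ht
    rw [interior_Ici, mem_Ioi] at ht
    rw [(te_hasDeriv t).deriv]
    exact mul_pos (by linarith) (Real.exp_pos t)

private lemma te_anti : StrictAntiOn (fun t : ℝ => t * Real.exp t) (Set.Iic (-1)) := by
  apply strictAntiOn_of_deriv_neg (convex_Iic _)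
  · exact (continuous_id.mul Real.continuous_exp).continuousOn
  · intro t ht
    rw [interior_Iic, mem_Iio] at ht
    rw [(te_hasDeriv t).deriv]
    exact mul_neg_of_neg_of_pos (by linarith) (Real.exp_pos t)

private lemma te_min (t : ℝ) : -Real.exp (-1) ≤ t * Real.exp t := by
  rcases le_or_gt 0 t with h | h
  · have := Real.exp_pos (-1); nlinarith [Real.exp_pos t, mul_nonneg h (Real.exp_pos t).le]
  · have h1 : -t ≤ Real.exp (-1 - t) * 1 := by
      have := Real.add_one_le_exp (-1 - t)
      nlinarith
    have h2 : Real.exp (-1 - t) = Real.exp (-1) / Real.exp t := by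
      rw [Real.exp_sub]
    rw [h2] at h1
    have he := Real.exp_pos t
    calc -Real.exp (-1) = -(Real.exp (-1) / Real.exp t) * Real.exp t := by field_simp
    _ ≤ t * Real.exp t := by nlinarith


-- from strict bounds |t e^t| < r conclude t^2 < r^2 e^{-2t}
private lemma sq_lt_of_abs_lt {r t : ℝ} (h1 : -r < t * Real.exp t) (h2 : t * Real.exp t < r) :
    t ^ 2 < r ^ 2 * Real.exp (-2 * t) := by
  have he : Real.exp (-2 * t) * (Real.exp t) ^ 2 = 1 := by
    rw [← Real.exp_nat_mul, ← Real.exp_add]; norm_num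
  have h3 : (t * Real.exp t) ^ 2 < r ^ 2 := by nlinarith
  have hp : (0:ℝ) < (Real.exp t) ^ 2 := by positivity
  nlinarith

private lemma antitone_aux {r p q : ℝ} (hr : 0 < r) (hpq : p ≤ q)
    (hmid : ∀ t, p < t → t < q → -r < t * Real.exp t ∧ t * Real.exp t < r) :
    gfun r q ≤ gfun r p := by
  have : AntitoneOn (gfun r) (Icc p q) := by
    apply antitoneOn_of_deriv_nonpos (convex_Icc p q) (gfun_cont r).continuousOn
    · intro t ht
      rw [interior_Icc] at ht
      obtain ⟨h1, h2⟩ := hmid t ht.1 ht.2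
      obtain ⟨D, hD, _⟩ := gfun_deriv hr (sq_lt_of_abs_lt h1 h2)
      exact hD.differentiableAt.differentiableWithinAt
    · intro t ht
      rw [interior_Icc] at ht
      obtain ⟨h1, h2⟩ := hmid t ht.1 ht.2
      obtain ⟨D, hD, hDneg⟩ := gfun_deriv hr (sq_lt_of_abs_lt h1 h2)
      rw [hD.deriv]; exact hDneg.le
  exact this (left_mem_Icc.2 hpq) (right_mem_Icc.2 hpq) hpq

-- M1' : both ≥ -1
private lemma gfun_anti_right {r p q : ℝ} (hr : 0 < r) (hp : -1 ≤ p) (hpq : p ≤ q)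
    (hpl : -r ≤ p * Real.exp p) (hqu : q * Real.exp q ≤ r) :
    gfun r q ≤ gfun r p := by
  apply antitone_aux hr hpq
  intro t h1 h2
  have l1 : p * Real.exp p < t * Real.exp t := te_mono (by simp [hp]) (by simp; linarith) h1
  have l2 : t * Real.exp t < q * Real.exp q := te_mono (by simp; linarith) (by simp; linarith) h2
  exact ⟨by linarith, by linarith⟩

-- M2' : both ≤ -1
private lemma gfun_anti_left {r p q : ℝ} (hr : 0 < r) (hq : q ≤ -1) (hpq : p ≤ q)
    (hql : -r ≤ q * Real.exp q) :
    gfun r q ≤ gfun r p := by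
  apply antitone_aux hr hpq
  intro t h1 h2
  have l1 : q * Real.exp q < t * Real.exp t := te_anti (by simp; linarith) (by simp [hq]) h2
  have l2 : t * Real.exp t < 0 := by
    have : t < 0 := by linarith
    nlinarith [Real.exp_pos t]
  exact ⟨by linarith, by linarith⟩

private lemma gfun_val_pos {r t : ℝ} (hr : 0 < r) (ht : t * Real.exp t = r) :
    gfun r t = 0 := by
  have h1 : t * Real.exp t / r = 1 := by rw [ht]; field_simp
  have h2 : r ^ 2 * Real.exp (-2 * t) - t ^ 2 = 0 := by
    have he : Real.exp (-2 * t) * (Real.exp t) ^ 2 = 1 := by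
      rw [← Real.exp_nat_mul, ← Real.exp_add]; norm_num
    have hr2 : r ^ 2 = t ^ 2 * (Real.exp t) ^ 2 := by rw [← ht]; ring
    rw [hr2]; linear_combination t ^ 2 * he
  unfold gfun
  rw [h1, h2, Real.arccos_one, Real.sqrt_zero, add_zero]

private lemma gfun_val_neg {r t : ℝ} (hr : 0 < r) (ht : t * Real.exp t = -r) :
    gfun r t = π := by
  have h1 : t * Real.exp t / r = -1 := by rw [ht]; field_simp
  have h2 : r ^ 2 * Real.exp (-2 * t) - t ^ 2 = 0 := by
    have he : Real.exp (-2 * t) * (Real.exp t) ^ 2 = 1 := by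
      rw [← Real.exp_nat_mul, ← Real.exp_add]; norm_num
    have hr2 : r ^ 2 = t ^ 2 * (Real.exp t) ^ 2 := by
      rw [show r = -(t * Real.exp t) by linarith]; ring
    rw [hr2]; linear_combination t ^ 2 * he
  unfold gfun
  rw [h1, h2, Real.arccos_neg_one, Real.sqrt_zero, add_zero]

-- combined antitonicity
private lemma gfun_anti {r p q : ℝ} (hr : 0 < r) (hpq : p ≤ q)
    (hpl : -r ≤ p * Real.exp p) (hpu : p * Real.exp p ≤ r) (hq : |q| * Real.exp q ≤ r) :
    gfun r q ≤ gfun r p := by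
  have hqu : q * Real.exp q ≤ r := le_trans (by nlinarith [le_abs_self q, Real.exp_pos q]) hq
  rcases le_or_gt q (-1) with hq1 | hq1
  · -- q ≤ -1
    have hql : -r ≤ q * Real.exp q := by
      have : -(q * Real.exp q) = |q| * Real.exp q := by
        rw [abs_of_nonpos (by linarith : q ≤ 0)]; ring
      linarith
    exact gfun_anti_left hr hq1 hpq hql
  rcases le_or_gt (-1) p with hp1 | hp1
  · exact gfun_anti_right hr hp1 hpq hpl hqu
  -- p < -1 < q
  rcases le_or_gt (Real.exp (-1)) r with hre | hre
  · -- no gap: pass through -1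
    have h1 : gfun r q ≤ gfun r (-1) := by
      apply gfun_anti_right hr le_rfl hq1.le _ hqu
      simp; linarith
    have h2 : gfun r (-1) ≤ gfun r p := by
      apply gfun_anti_left hr le_rfl hp1.le
      simp; linarith
    linarith
  · -- gap case: r < 1/e. find a ∈ [p, -1] with a e^a = -r, and b ∈ [-1,0] with b e^b = -r
    have hcont : ContinuousOn (fun t : ℝ => t * Real.exp t) (Icc p (-1)) :=
      (continuous_id.mul Real.continuous_exp).continuousOn
    have hmem : -r ∈ Icc ((-1) * Real.exp (-1)) (p * Real.exp p) := by
      constructor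
      · simp; linarith
      · linarith
    obtain ⟨a, ha, hae0⟩ := intermediate_value_Icc' hp1.le hcont hmem
    have hae : a * Real.exp a = -r := hae0
    have hcont2 : ContinuousOn (fun t : ℝ => t * Real.exp t) (Icc (-1) 0) :=
      (continuous_id.mul Real.continuous_exp).continuousOn
    have hmem2 : -r ∈ Icc ((-1) * Real.exp (-1)) (0 * Real.exp 0) := by
      constructor
      · simp; linarith
      · simp; linarith
    obtain ⟨b, hb, hbe0⟩ := intermediate_value_Icc (by norm_num) hcont2 hmem2
    have hbe : b * Real.exp b = -r := hbe0
    -- g q ≤ g b = π = g a ≤ g p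
    have hga : gfun r a = π := gfun_val_neg hr hae
    have hgb : gfun r b = π := gfun_val_neg hr hbe
    have hbq : b ≤ q := by
      rcases le_or_gt 0 q with h | h
      · linarith [hb.2]
      · -- q ∈ (-1, 0): q e^q ≥ -r = b e^b, monotone
        by_contra hc
        push_neg at hc
        have : q * Real.exp q < b * Real.exp b := te_mono (by simp; linarith) (by simp [hb.1]) hc
        rw [hbe] at this
        have hq0 : q * Real.exp q ≥ -r := by
          have : -(q * Real.exp q) ≤ |q| * Real.exp q := by
            rw [abs_of_nonpos h.le]; ring_nf; exact le_rfl
          linarith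
        linarith
    have h1 : gfun r q ≤ gfun r b := by
      apply gfun_anti_right hr hb.1 hbq (by rw [hbe]) hqu
    have h2 : gfun r a ≤ gfun r p := by
      apply gfun_anti_left hr ha.2 ha.1 (by rw [hae])
    linarith


private lemma arccos_cos_le_abs (t : ℝ) : Real.arccos (Real.cos t) ≤ |t| := by
  rcases le_or_gt (|t|) π with h | h
  · rw [← Real.cos_abs t, Real.arccos_cos (abs_nonneg t) h]
  · exact le_trans (Real.arccos_le_pi _) h.le

private lemma abs_arg_eq (z : ℂ) (hz : z ≠ 0) :
    |Complex.arg z| = Real.arccos (z.re / ‖z‖) := by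
  rw [← Complex.cos_arg hz, ← Real.cos_abs, Real.arccos_cos (abs_nonneg _) (Complex.abs_arg_le_pi z)]

private lemma sol_facts {ζ z : ℂ} (hz : z * Complex.exp z = ζ) (hζ : ζ ≠ 0) :
    |ζ.arg| ≤ gfun (‖ζ‖) z.re ∧ |z.re| * Real.exp z.re ≤ ‖ζ‖ := by
  have hz0 : z ≠ 0 := by
    rintro rfl; rw [zero_mul] at hz; exact hζ hz.symm
  have hzabs : (0:ℝ) < ‖z‖ := norm_pos_iff.mpr hz0
  set x := z.re with hx
  set y := z.im with hy
  set r := ‖ζ‖ with hr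
  set A := Complex.arg z with hA
  have hrpos : (0:ℝ) < r := norm_pos_iff.mpr hζ
  have habs : r = ‖z‖ * Real.exp x := by rw [hr, ← hz, norm_mul, Complex.norm_exp]
  have hD : |x| * Real.exp x ≤ r := by
    rw [habs]
    exact mul_le_mul_of_nonneg_right (Complex.abs_re_le_norm z) (Real.exp_pos x).le
  have hzr : ‖z‖ = r * Real.exp (-x) := by
    rw [habs, Real.exp_neg]
    field_simp
  have hcos : Real.cos A = x / ‖z‖ := Complex.cos_arg hz0
  have hsin : Real.sin A = y / ‖z‖ := Complex.sin_arg z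
  -- ζ.re = r * cos (A + y)
  have hre : ζ.re = r * Real.cos (A + y) := by
    rw [Real.cos_add, hcos, hsin, ← hz]
    rw [Complex.mul_re, Complex.exp_re, Complex.exp_im]
    rw [habs]
    field_simp
    ring
  have h1 : |ζ.arg| = Real.arccos (Real.cos (A + y)) := by
    rw [abs_arg_eq ζ hζ, hre]
    congr 1
    rw [hr]
    field_simp
  have h2 : |A| = Real.arccos (x * Real.exp x / r) := by
    rw [abs_arg_eq z hz0]
    congr 1
    rw [hzr, Real.exp_neg]
    field_simp
    rfl
  have hy2 : y ^ 2 = r ^ 2 * Real.exp (-2 * x) - x ^ 2 := by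
    have hsq : (‖z‖) ^ 2 = x ^ 2 + y ^ 2 := by
      rw [Complex.sq_norm, Complex.normSq_apply]; ring
    have h4 : (‖z‖) ^ 2 = r ^ 2 * Real.exp (-2 * x) := by
      rw [hzr, mul_pow, ← Real.exp_nat_mul]
      congr 2
      push_cast; ring
    linarith [hsq, h4]
  have h3 : |y| = Real.sqrt (r ^ 2 * Real.exp (-2 * x) - x ^ 2) := by
    rw [← hy2, Real.sqrt_sq_eq_abs]
  refine ⟨?_, hD⟩
  calc |ζ.arg| = Real.arccos (Real.cos (A + y)) := h1
    _ ≤ |A + y| := arccos_cos_le_abs _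
    _ ≤ |A| + |y| := abs_add_le _ _
    _ = gfun r x := by rw [h2, h3]; rfl


private lemma exists_c {r : ℝ} (hr : 0 ≤ r) : ∃ c, 0 ≤ c ∧ c * Real.exp c = r := by
  have hcont : ContinuousOn (fun t : ℝ => t * Real.exp t) (Icc 0 r) :=
    (continuous_id.mul Real.continuous_exp).continuousOn
  have hmem : r ∈ Icc ((0:ℝ) * Real.exp 0) (r * Real.exp r) := by
    constructor
    · simpa using hr
    · nlinarith [Real.add_one_le_exp r]
  obtain ⟨c, hc, hce⟩ := intermediate_value_Icc hr hcont hmem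
  exact ⟨c, hc.1, hce⟩

set_option maxHeartbeats 1000000 in
private lemma exists_sol {ζ : ℂ} (hζ : ζ ≠ 0) {x : ℝ}
    (hD : x ^ 2 ≤ (‖ζ‖) ^ 2 * Real.exp (-2 * x))
    (hg : gfun (‖ζ‖) x = |ζ.arg|) :
    ∃ z : ℂ, z.re = x ∧ z * Complex.exp z = ζ := by
  set r := ‖ζ‖ with hr
  set θ := ζ.arg with hθdef
  have hrpos : (0:ℝ) < r := norm_pos_iff.mpr hζ
  obtain ⟨Y, hYdef⟩ : ∃ Y, Y = Real.sqrt (r ^ 2 * Real.exp (-2 * x) - x ^ 2) := ⟨_, rfl⟩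
  have hY0 : 0 ≤ Y := hYdef ▸ Real.sqrt_nonneg _
  have hY2 : Y ^ 2 = r ^ 2 * Real.exp (-2 * x) - x ^ 2 := by
    rw [hYdef]; exact Real.sq_sqrt (by linarith)
  obtain ⟨s, hsdef⟩ : ∃ s : ℝ, s = if 0 ≤ θ then 1 else -1 := ⟨_, rfl⟩
  have hs2 : s ^ 2 = 1 := by rcases le_or_gt 0 θ with h | h <;> simp [hsdef, h]
  obtain ⟨z, hzdef⟩ : ∃ z : ℂ, z = (x : ℂ) + (s * Y : ℝ) * Complex.I := ⟨_, rfl⟩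
  have hzre : z.re = x := by simp [hzdef]
  have hzim : z.im = s * Y := by simp [hzdef]
  have hexpx : Real.exp (-2 * x) = (Real.exp (-x)) ^ 2 := by
    rw [← Real.exp_nat_mul]; congr 1; push_cast; ring
  have habsz : ‖z‖ = r * Real.exp (-x) := by
    rw [Complex.norm_def, Complex.normSq_apply, hzre, hzim]
    have h1 : x * x + s * Y * (s * Y) = (r * Real.exp (-x)) ^ 2 := by
      have h2 : s * Y * (s * Y) = Y ^ 2 := by
        have h3 : s * Y * (s * Y) = s ^ 2 * Y ^ 2 := by ring
        rw [h3, hs2]; ring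
      rw [h2, hY2, mul_pow, ← hexpx]; ring
    rw [h1, Real.sqrt_sq (by positivity)]
  have hz0 : z ≠ 0 := by
    intro h
    have h4 : ‖z‖ = 0 := by rw [h]; simp
    rw [habsz] at h4
    nlinarith [Real.exp_pos (-x)]
  have hxdiv : z.re / ‖z‖ = x * Real.exp x / r := by
    rw [hzre, habsz, Real.exp_neg]
    field_simp
  have hgY : Real.arccos (x * Real.exp x / r) + Y = |θ| := by
    unfold gfun at hg
    rw [← hYdef] at hg
    exact hg
  -- the key angle identity
  have hangle : Complex.arg z + s * Y = θ := by
    rcases le_or_gt 0 θ with hθ | hθ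
    · have hs1 : s = 1 := by simp [hsdef, hθ]
      have hA : Complex.arg z = Real.arccos (x * Real.exp x / r) := by
        have hnn : 0 ≤ Complex.arg z := Complex.arg_nonneg_iff.mpr (by rw [hzim, hs1]; linarith)
        rw [← abs_of_nonneg hnn, abs_arg_eq z hz0, hxdiv]
      rw [abs_of_nonneg hθ] at hgY
      rw [hA, hs1, one_mul]
      linarith
    · have hs1 : s = -1 := by simp [hsdef, not_le.mpr hθ]
      rw [abs_of_neg hθ] at hgY
      have hYpos : 0 < Y := by
        rcases lt_or_eq_of_le hY0 with h | h
        · exact h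
        · exfalso
          have hrad : r ^ 2 * Real.exp (-2 * x) - x ^ 2 = 0 := by
            rw [← hY2, ← h]; ring
          have h5 : Real.exp (-2 * x) * (Real.exp x) ^ 2 = 1 := by
            rw [← Real.exp_nat_mul, ← Real.exp_add]; norm_num
          have hx2 : x ^ 2 * (Real.exp x) ^ 2 = r ^ 2 := by
            linear_combination r ^ 2 * h5 - (Real.exp x) ^ 2 * hrad
          have hxne : x ≠ 0 := by
            intro h0; rw [h0] at hx2; simp at hx2; nlinarith
          have hYe : Y = 0 := h.symm
          rw [hYe, add_zero] at hgY
          rcases lt_or_gt_of_ne hxne with hxneg | hxpos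
          · have hxe : x * Real.exp x = -r := by
              have h6 : (x * Real.exp x + r) * (x * Real.exp x - r) = 0 := by
                linear_combination hx2
              have hneg : x * Real.exp x < 0 := mul_neg_of_neg_of_pos hxneg (Real.exp_pos x)
              rcases mul_eq_zero.mp h6 with h7 | h7
              · linarith
              · linarith
            rw [hxe, show -r / r = -1 by field_simp, Real.arccos_neg_one] at hgY
            have h7 := Complex.neg_pi_lt_arg ζ
            rw [← hθdef] at h7
            linarith
          · have hxe : x * Real.exp x = r := by
              have h6 : (x * Real.exp x + r) * (x * Real.exp x - r) = 0 := by
                linear_combination hx2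
              have hpos : 0 < x * Real.exp x := mul_pos hxpos (Real.exp_pos x)
              rcases mul_eq_zero.mp h6 with h7 | h7
              · linarith
              · linarith
            rw [hxe, show r / r = 1 by field_simp, Real.arccos_one] at hgY
            linarith
      have hA : Complex.arg z = -Real.arccos (x * Real.exp x / r) := by
        have hneg : Complex.arg z < 0 :=
          Complex.arg_neg_iff.mpr (by rw [hzim, hs1]; nlinarith)
        have h8 : |Complex.arg z| = Real.arccos (x * Real.exp x / r) := by
          rw [abs_arg_eq z hz0, hxdiv]
        rw [abs_of_neg hneg] at h8
        linarith
      rw [hA, hs1]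
      linarith
  -- assemble
  refine ⟨z, hzre, ?_⟩
  have hzp : (‖z‖ : ℂ) * Complex.exp ((Complex.arg z : ℂ) * Complex.I) = z :=
    Complex.norm_mul_exp_arg_mul_I z
  have hζp : (r : ℂ) * Complex.exp ((θ : ℝ) * Complex.I) = ζ := Complex.norm_mul_exp_arg_mul_I ζ
  have hexpz : Complex.exp z = (Real.exp x : ℂ) * Complex.exp ((s * Y : ℝ) * Complex.I) := by
    rw [hzdef, Complex.exp_add, Complex.ofReal_exp]
  have habsr : ‖z‖ * Real.exp x = r := by
    rw [habsz, Real.exp_neg]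
    field_simp
  calc z * Complex.exp z
      = ((‖z‖ : ℂ) * Complex.exp ((Complex.arg z : ℂ) * Complex.I)) *
        ((Real.exp x : ℂ) * Complex.exp ((s * Y : ℝ) * Complex.I)) := by rw [hzp, ← hexpz]
    _ = ((‖z‖ * Real.exp x : ℝ) : ℂ) *
        Complex.exp ((Complex.arg z : ℂ) * Complex.I + (s * Y : ℝ) * Complex.I) := by
          rw [Complex.exp_add]
          push_cast
          ring
    _ = (r : ℂ) * Complex.exp (((Complex.arg z + s * Y : ℝ)) * Complex.I) := by
          rw [habsr]
          congr 1
          push_cast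
          ring
    _ = ζ := by rw [hangle, hζp]


private lemma sq_le_of_abs_le {r t : ℝ} (h1 : -r ≤ t * Real.exp t) (h2 : t * Real.exp t ≤ r) :
    t ^ 2 ≤ r ^ 2 * Real.exp (-2 * t) := by
  have he : Real.exp (-2 * t) * (Real.exp t) ^ 2 = 1 := by
    rw [← Real.exp_nat_mul, ← Real.exp_add]; norm_num
  have h3 : (t * Real.exp t) ^ 2 ≤ r ^ 2 := by nlinarith
  have hp : (0:ℝ) < (Real.exp t) ^ 2 := by positivity
  nlinarith

private lemma exists_b {r : ℝ} (hr1 : 0 ≤ r) (hr2 : r ≤ Real.exp (-1)) :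
    ∃ b, -1 ≤ b ∧ b ≤ 0 ∧ b * Real.exp b = -r := by
  have hcont : ContinuousOn (fun t : ℝ => t * Real.exp t) (Icc (-1) 0) :=
    (continuous_id.mul Real.continuous_exp).continuousOn
  have hmem : -r ∈ Icc ((-1) * Real.exp (-1)) ((0:ℝ) * Real.exp 0) := by
    constructor
    · simp; linarith
    · simp; linarith
  obtain ⟨b, hb, hbe⟩ := intermediate_value_Icc (by norm_num) hcont hmem
  exact ⟨b, hb.1, hb.2, hbe⟩

set_option maxHeartbeats 1000000 in
/-- All values of the (set-valued) Lambert `W` function at `ζ` have real part `< σ` iff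
either `σ e^σ > |ζ|`, or `−|ζ| < σ e^σ ≤ |ζ|` and
`|Arg ζ| > arccos(σ e^σ / |ζ|) + √(|ζ|² e^{−2σ} − σ²)`. -/
theorem lambertW_re_lt (ζ : ℂ) (σ : ℝ) :
    (∀ z : ℂ, z * Complex.exp z = ζ → z.re < σ) ↔
      (σ * Real.exp σ > ‖ζ‖ ∨
        (-‖ζ‖ < σ * Real.exp σ ∧ σ * Real.exp σ ≤ ‖ζ‖ ∧
          |ζ.arg| > Real.arccos (σ * Real.exp σ / ‖ζ‖) +
            Real.sqrt ((‖ζ‖) ^ 2 * Real.exp (-2 * σ) - σ ^ 2))) := by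
  have hgσ : Real.arccos (σ * Real.exp σ / ‖ζ‖) +
      Real.sqrt ((‖ζ‖) ^ 2 * Real.exp (-2 * σ) - σ ^ 2) = gfun (‖ζ‖) σ := rfl
  rw [hgσ]
  set r := ‖ζ‖ with hrdef
  have hr0 : 0 ≤ r := norm_nonneg ζ
  constructor
  · intro H
    by_contra hRR
    push_neg at hRR
    obtain ⟨h1, h2⟩ := hRR
    rcases eq_or_lt_of_le hr0 with hr | hrpos
    · -- r = 0, ζ = 0
      have hζ0 : ζ = 0 := by
        have : ‖ζ‖ = 0 := hr.symm
        exact norm_eq_zero.mp this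
      have hσ0 : σ ≤ 0 := by
        by_contra h
        push_neg at h
        have : 0 < σ * Real.exp σ := mul_pos h (Real.exp_pos σ)
        rw [← hr] at h1
        linarith
      have := H 0 (by simp [hζ0])
      simp at this
      linarith
    · have hζ0 : ζ ≠ 0 := by
        intro h
        rw [h] at hrdef
        simp at hrdef
        linarith [hrdef ▸ hrpos]
      obtain ⟨c, hc0, hce⟩ := exists_c hr0
      have hgc : gfun r c = 0 := gfun_val_pos hrpos hce
      have hθpi : |ζ.arg| ≤ π := Complex.abs_arg_le_pi ζ
      rcases le_or_gt (σ * Real.exp σ) (-r) with hA | hB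
      · -- case A
        have hrle : r ≤ Real.exp (-1) := by linarith [te_min σ]
        obtain ⟨b, hb1, hb2, hbe⟩ := exists_b hr0 hrle
        have hgb : gfun r b = π := gfun_val_neg hrpos hbe
        have hσb : σ ≤ b := by
          by_contra hcon
          push_neg at hcon
          rcases le_or_gt σ (-1) with h | h
          · linarith
          · have : b * Real.exp b < σ * Real.exp σ :=
              te_mono (by simpa using hb1) (by simp; linarith) hcon
            rw [hbe] at this
            linarith
        have hbc : b ≤ c := le_trans hb2 hc0
        have hmem : |ζ.arg| ∈ Icc (gfun r c) (gfun r b) := by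
          rw [hgc, hgb]; exact ⟨abs_nonneg _, hθpi⟩
        obtain ⟨x, hx, hgx0⟩ := intermediate_value_Icc' hbc (gfun_cont r).continuousOn hmem
        have hgx : gfun r x = |ζ.arg| := hgx0
        have hxD : x ^ 2 ≤ r ^ 2 * Real.exp (-2 * x) := by
          apply sq_le_of_abs_le
          · rcases le_or_gt x 0 with h | h
            · have : b * Real.exp b ≤ x * Real.exp x :=
                te_mono.monotoneOn (by simpa using hb1) (by simp; linarith [hx.1]) hx.1
              linarith [hbe ▸ this]
            · nlinarith [Real.exp_pos x]
          · rcases le_or_gt x 0 with h | h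
            · nlinarith [Real.exp_pos x]
            · have : x * Real.exp x ≤ c * Real.exp c :=
                te_mono.monotoneOn (by simp; linarith) (by simp; linarith [hx.2]) hx.2
              linarith [hce ▸ this]
        obtain ⟨z, hzre, hzsol⟩ := exists_sol hζ0 hxD hgx
        have := H z hzsol
        rw [hzre] at this
        linarith [hx.1]
      · -- case B
        have hθle : |ζ.arg| ≤ gfun r σ := h2 hB h1
        have hσc : σ ≤ c := by
          by_contra hcon
          push_neg at hcon
          have : c * Real.exp c < σ * Real.exp σ :=
            te_mono (by simp; linarith) (by simp; linarith) hcon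
          rw [hce] at this
          linarith
        have hmem : |ζ.arg| ∈ Icc (gfun r c) (gfun r σ) := by
          rw [hgc]; exact ⟨abs_nonneg _, hθle⟩
        obtain ⟨x, hx, hgx0⟩ := intermediate_value_Icc' hσc (gfun_cont r).continuousOn hmem
        have hgx : gfun r x = |ζ.arg| := hgx0
        rcases le_or_gt (x ^ 2) (r ^ 2 * Real.exp (-2 * x)) with hxD | hxD
        · obtain ⟨z, hzre, hzsol⟩ := exists_sol hζ0 hxD hgx
          have := H z hzsol
          rw [hzre] at this
          linarith [hx.1]
        · -- x outside domain: x e^x < -r, θ = π, use b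
          have hx0 : x < 0 := by
            by_contra h
            push_neg at h
            have hxc : x * Real.exp x ≤ c * Real.exp c :=
              te_mono.monotoneOn (by simp; linarith) (by simp; linarith) hx.2
            rw [hce] at hxc
            have : x ^ 2 ≤ r ^ 2 * Real.exp (-2 * x) :=
              sq_le_of_abs_le (by nlinarith [Real.exp_pos x]) hxc
            linarith
          have hxe : x * Real.exp x < -r := by
            by_contra h
            push_neg at h
            have : x ^ 2 ≤ r ^ 2 * Real.exp (-2 * x) :=
              sq_le_of_abs_le h (by nlinarith [Real.exp_pos x])
            linarith
          have hgxpi : gfun r x = π := by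
            unfold gfun
            have harc : Real.arccos (x * Real.exp x / r) = π := by
              have hle : x * Real.exp x / r ≤ -1 := by
                rw [div_le_iff₀ hrpos]
                linarith
              rw [Real.arccos, Real.arcsin_of_le_neg_one hle]
              ring
            have hsq0 : Real.sqrt (r ^ 2 * Real.exp (-2 * x) - x ^ 2) = 0 :=
              Real.sqrt_eq_zero'.mpr (by linarith)
            rw [harc, hsq0, add_zero]
          have hθpi2 : |ζ.arg| = π := by rw [← hgx, hgxpi]
          have hθeq : ζ.arg = π := by
            rcases abs_eq (le_of_lt Real.pi_pos) |>.mp hθpi2 with h | h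
            · exact h
            · linarith [Complex.neg_pi_lt_arg ζ]
          have hζval : ζ = ((-r : ℝ) : ℂ) := by
            rw [← Complex.norm_mul_exp_arg_mul_I ζ, hθeq]
            rw [show ((π : ℝ) : ℂ) * Complex.I = (π : ℂ) * Complex.I by norm_cast]
            rw [Complex.exp_pi_mul_I]
            push_cast
            ring
          have hrle : r ≤ Real.exp (-1) := by linarith [te_min x]
          obtain ⟨b, hb1, hb2, hbe⟩ := exists_b hr0 hrle
          have hxb : x ≤ b := by
            rcases le_or_gt x (-1) with h | h
            · linarith
            · by_contra hcon
              push_neg at hcon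
              have : b * Real.exp b < x * Real.exp x :=
                te_mono (by simpa using hb1) (by simp; linarith) hcon
              rw [hbe] at this
              linarith
          have hsol : (b : ℂ) * Complex.exp (b : ℂ) = ζ := by
            rw [hζval, ← Complex.ofReal_exp, ← Complex.ofReal_mul, hbe]
          have := H _ hsol
          simp at this
          linarith [hx.1]
  · intro hR z hz
    rcases hR with hi | ⟨hB, h1, hArg⟩
    · -- case (i)
      have hσpos : 0 < σ := by
        by_contra h
        push_neg at h
        nlinarith [Real.exp_pos σ]
      by_contra hcon
      push_neg at hcon
      have habs : r = ‖z‖ * Real.exp z.re := by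
        rw [hrdef, ← hz, norm_mul, Complex.norm_exp]
      have h2' : z.re * Real.exp z.re ≤ r := by
        rw [habs]
        exact mul_le_mul_of_nonneg_right
          (le_trans (le_abs_self _) (Complex.abs_re_le_norm z)) (Real.exp_pos _).le
      have h3 : σ * Real.exp σ ≤ z.re * Real.exp z.re :=
        te_mono.monotoneOn (by simp; linarith) (by simp; linarith) hcon
      linarith
    · -- case (ii)
      have hrpos : 0 < r := by linarith
      have hζ0 : ζ ≠ 0 := by
        intro h
        rw [h] at hrdef
        simp at hrdef
        linarith [hrdef ▸ hrpos]
      by_contra hcon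
      push_neg at hcon
      obtain ⟨hθle, hD⟩ := sol_facts hz hζ0
      have hanti : gfun r z.re ≤ gfun r σ := gfun_anti hrpos hcon hB.le h1 hD
      rw [← hrdef] at hθle
      linarith
end

section
/- Let a, w ∈ ℂ and τ > 0. Then every z ∈ ℂ with z + a − w·exp(−τ·z) = 0 satisfies Re(z) < 0 if and only if one of the following holds: (i) Re(a) > |w|; (ii) −|w| < Re(a) ≤ |w| and arccos(cos(τ·Im(a) + Arg(w))) > arccos(Re(a)/|w|) + τ·√(|w|² − Re(a)²). -/
open Real Set

namespace StabAux

/-- `C(ρ) = (c + ln(R/ρ)/τ)/ρ`, the cosine of the argument of `z+a` for a root with `|z+a| = ρ`. -/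
noncomputable def Cf (τ R c ρ : ℝ) : ℝ := (c + (Real.log R - Real.log ρ) / τ) / ρ

/-- `G(ρ) = arccos C(ρ) + τ ρ √(1 - C(ρ)²)`. -/
noncomputable def Gf (τ R c ρ : ℝ) : ℝ :=
  Real.arccos (Cf τ R c ρ) + τ * ρ * Real.sqrt (1 - (Cf τ R c ρ) ^ 2)

lemma Cf_R (τ R c : ℝ) (hR : 0 < R) : Cf τ R c R = c / R := by
  simp [Cf]

lemma sqrt_one_sub_div_sq (R c : ℝ) (hR : 0 < R) :
    R * Real.sqrt (1 - (c / R) ^ 2) = Real.sqrt (R ^ 2 - c ^ 2) := by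
  have h : 1 - (c / R) ^ 2 = (R ^ 2 - c ^ 2) / R ^ 2 := by field_simp
  rw [h]
  rcases le_or_gt 0 (R ^ 2 - c ^ 2) with h2 | h2
  · rw [Real.sqrt_div h2, Real.sqrt_sq hR.le]
    field_simp
  · rw [Real.sqrt_eq_zero_of_nonpos h2.le, Real.sqrt_eq_zero_of_nonpos, mul_zero]
    exact div_nonpos_of_nonpos_of_nonneg h2.le (sq_nonneg R)

lemma Gf_R (τ R c : ℝ) (hR : 0 < R) :
    Gf τ R c R = Real.arccos (c / R) + τ * Real.sqrt (R ^ 2 - c ^ 2) := by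
  rw [Gf, Cf_R _ _ _ hR, mul_assoc, sqrt_one_sub_div_sq _ _ hR]

lemma arccos_cos_le_abs (t : ℝ) : Real.arccos (Real.cos t) ≤ |t| := by
  have h : Real.cos t = Real.cos |t| := by
    rcases abs_cases t with ⟨h, _⟩ | ⟨h, _⟩ <;> rw [h] <;> simp [Real.cos_neg]
  rw [h]
  rcases le_or_gt |t| π with h2 | h2
  · rw [Real.arccos_cos (abs_nonneg t) h2]
  · exact (Real.arccos_le_pi _).trans h2.le

lemma arccos_cos_abs_le_pi (t : ℝ) (h1 : -π ≤ t) (h2 : t ≤ π) :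
    Real.arccos (Real.cos t) = |t| := by
  have h : Real.cos t = Real.cos |t| := by
    rcases abs_cases t with ⟨h, _⟩ | ⟨h, _⟩ <;> rw [h] <;> simp [Real.cos_neg]
  rw [h, Real.arccos_cos (abs_nonneg t) (abs_le.2 ⟨h1, h2⟩)]




lemma dip_pi_le (τ R c : ℝ) (hτ : 0 < τ) (hR : 0 < R) (hc : -R < c)
    (x : ℝ) (hx : 0 < x) (hdip : R * Real.exp (-(τ * x)) + x + c ≤ 0) :
    π ≤ Real.arccos (c / R) + τ * Real.sqrt (R ^ 2 - c ^ 2) := by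
  have hcx : -c ≥ x + R * Real.exp (-(τ * x)) := by linarith
  -- τR > 1
  have htR : 1 < τ * R := by
    by_contra h
    push_neg at h
    have he : 1 - τ * x ≤ Real.exp (-(τ * x)) := by
      have := Real.add_one_le_exp (-(τ * x)); linarith
    have h1 : R * (1 - τ * x) ≤ R * Real.exp (-(τ * x)) :=
      mul_le_mul_of_nonneg_left he hR.le
    have h2 : R * (τ * x) ≤ x := by
      calc R * (τ * x) = (τ * R) * x := by ring
        _ ≤ 1 * x := mul_le_mul_of_nonneg_right h hx.le
        _ = x := one_mul x
    nlinarith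
  -- 1 ≤ τ(-c)
  have hlog : 0 < Real.log (τ * R) := Real.log_pos htR
  have hkey : 1 ≤ τ * (-c) := by
    have he : Real.log (τ * R) - τ * x + 1 ≤ τ * R * Real.exp (-(τ * x)) := by
      have := Real.add_one_le_exp (Real.log (τ * R) - τ * x)
      rw [Real.exp_sub, Real.exp_log (by positivity), div_eq_mul_inv, ← Real.exp_neg] at this
      exact this
    have h2 : τ * (-c) ≥ τ * x + τ * (R * Real.exp (-(τ * x))) := by nlinarith
    nlinarith
  have hc0 : 0 < -c := by nlinarith
  have hcR1 : -c / R < 1 := (div_lt_one hR).2 (by linarith)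
  have hcR0 : 0 < -c / R := div_pos hc0 hR
  set α := Real.arccos (-c / R) with hα
  have hα2 : α < π / 2 := Real.arccos_lt_pi_div_two.2 hcR0
  have hα0 : 0 < α := Real.arccos_pos.2 hcR1
  have hcosα : Real.cos α = -c / R := Real.cos_arccos (by linarith) hcR1.le
  have hsinα : Real.sin α = Real.sqrt (1 - (c / R) ^ 2) := by
    rw [hα, Real.sin_arccos]; ring_nf
  have htan : α < Real.tan α := Real.lt_tan hα0 hα2
  have hsin0 : 0 < Real.sin α := Real.sin_pos_of_pos_of_lt_pi hα0 (by linarith [Real.pi_pos])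
  -- α < sin α * R / (-c) ≤ τ * (R * sin α)
  have h5 : α < Real.sin α * (R / (-c)) := by
    have : Real.tan α = Real.sin α / Real.cos α := Real.tan_eq_sin_div_cos α
    rw [this, hcosα] at htan
    have heq : Real.sin α / (-c / R) = Real.sin α * (R / (-c)) := by
      rw [div_div_eq_mul_div, mul_div_assoc]
    linarith [htan, heq ▸ htan]
  have h6 : R / (-c) ≤ τ * R := by
    rw [div_le_iff₀ hc0]
    nlinarith
  have h7 : α ≤ τ * (R * Real.sin α) := by nlinarith
  have h8 : R * Real.sin α = Real.sqrt (R ^ 2 - c ^ 2) := by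
    rw [hsinα, sqrt_one_sub_div_sq _ _ hR]
  have h9 : Real.arccos (c / R) = π - α := by
    rw [hα, ← Real.arccos_neg]; ring_nf
  rw [h9]
  rw [h8] at h7
  linarith

lemma hasDerivAt_Cf (τ R c : ℝ) (hτ : 0 < τ) {ρ : ℝ} (hρ : 0 < ρ) :
    HasDerivAt (Cf τ R c) (-(1 / τ + ρ * Cf τ R c ρ) / ρ ^ 2) ρ := by
  have hN : HasDerivAt (fun t => c + (Real.log R - Real.log t) / τ) (-ρ⁻¹ / τ) ρ :=
    (((Real.hasDerivAt_log hρ.ne').const_sub (Real.log R)).div_const τ).const_add c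
  have hD : HasDerivAt (fun t : ℝ => t) 1 ρ := hasDerivAt_id ρ
  have h := hN.div hD hρ.ne'
  refine h.congr_deriv ?_
  unfold Cf
  field_simp
  ring

lemma deriv_Gf_pos (τ R c : ℝ) (hτ : 0 < τ) {ρ : ℝ} (hρ : 0 < ρ)
    (h1 : -1 < Cf τ R c ρ) (h2 : Cf τ R c ρ < 1) :
    0 < deriv (Gf τ R c) ρ := by
  set C := Cf τ R c ρ with hC
  set C' := -(1 / τ + ρ * C) / ρ ^ 2 with hC'
  have hpos : 0 < 1 - C ^ 2 := by nlinarith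
  set s := Real.sqrt (1 - C ^ 2) with hs
  have hs0 : 0 < s := Real.sqrt_pos.2 hpos
  have hCd : HasDerivAt (Cf τ R c) C' ρ := hasDerivAt_Cf τ R c hτ hρ
  have hA : HasDerivAt (fun t => Real.arccos (Cf τ R c t)) (-(1 / s) * C') ρ :=
    by have := (Real.hasDerivAt_arccos h1.ne' h2.ne).comp ρ hCd; exact this
  have hI : HasDerivAt (fun t => 1 - Cf τ R c t ^ 2) (-(2 * C ^ 1 * C')) ρ :=
    ((hCd.pow 2).const_sub 1).congr_deriv (by push_cast; ring)
  have hS : HasDerivAt (fun t => Real.sqrt (1 - Cf τ R c t ^ 2))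
      (1 / (2 * s) * -(2 * C ^ 1 * C')) ρ :=
    (Real.hasDerivAt_sqrt hpos.ne').comp ρ hI
  have hM : HasDerivAt (fun t : ℝ => τ * t) τ ρ := by simpa using (hasDerivAt_id ρ).const_mul τ
  have hP : HasDerivAt (fun t => τ * t * Real.sqrt (1 - Cf τ R c t ^ 2))
      (τ * s + τ * ρ * (1 / (2 * s) * -(2 * C ^ 1 * C'))) ρ := hM.mul hS
  have hG : HasDerivAt (Gf τ R c)
      (-(1 / s) * C' + (τ * s + τ * ρ * (1 / (2 * s) * -(2 * C ^ 1 * C')))) ρ := by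
    have := hA.add hP
    exact this
  rw [hG.deriv]
  have hval : -(1 / s) * C' + (τ * s + τ * ρ * (1 / (2 * s) * -(2 * C ^ 1 * C')))
      = (1 + τ * ρ * C) ^ 2 / (τ * ρ ^ 2 * s) + τ * s := by
    rw [hC']
    field_simp
    ring
  rw [hval]
  positivity

lemma continuousOn_Cf (τ R c : ℝ) {s : Set ℝ} (hs : ∀ x ∈ s, x ≠ 0) :
    ContinuousOn (Cf τ R c) s := by
  apply ContinuousOn.div
  · exact continuousOn_const.add ((continuousOn_const.sub (Real.continuousOn_log.mono hs)).div_const τ)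
  · exact continuousOn_id
  · exact hs

lemma continuousOn_Gf (τ R c : ℝ) {s : Set ℝ} (hs : ∀ x ∈ s, x ≠ 0) :
    ContinuousOn (Gf τ R c) s := by
  have hC := continuousOn_Cf τ R c hs
  exact (Real.continuous_arccos.comp_continuousOn hC).add
    (((continuous_const.mul continuous_id).continuousOn).mul
      (Real.continuous_sqrt.comp_continuousOn (continuousOn_const.sub (hC.pow 2))))

lemma Gf_monoOn (τ R c : ℝ) (hτ : 0 < τ) {ρ₁ : ℝ} (h0 : 0 < ρ₁) (hle : ρ₁ ≤ R)
    (hint : ∀ ρ ∈ Ioo ρ₁ R, -1 < Cf τ R c ρ ∧ Cf τ R c ρ < 1) :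
    MonotoneOn (Gf τ R c) (Icc ρ₁ R) := by
  have hs : ∀ x ∈ Icc ρ₁ R, x ≠ 0 := fun x hx => (lt_of_lt_of_le h0 hx.1).ne'
  apply (strictMonoOn_of_deriv_pos (convex_Icc _ _) (continuousOn_Gf τ R c hs) ?_).monotoneOn
  intro ρ hρ
  rw [interior_Icc] at hρ
  exact deriv_Gf_pos τ R c hτ (h0.trans hρ.1) (hint ρ hρ).1 (hint ρ hρ).2

-- Cf comparison facts
lemma Cf_le_one_iff (τ R c : ℝ) (hτ : 0 < τ) {ρ : ℝ} (hρ : 0 < ρ) :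
    Cf τ R c ρ ≤ 1 ↔ c ≤ ρ + (Real.log ρ - Real.log R) / τ := by
  rw [Cf, div_le_one hρ]
  have hh : (Real.log ρ - Real.log R) / τ = -((Real.log R - Real.log ρ) / τ) := by ring
  rw [hh]; constructor <;> intro h <;> linarith

lemma Cf_lt_one_iff (τ R c : ℝ) (hτ : 0 < τ) {ρ : ℝ} (hρ : 0 < ρ) :
    Cf τ R c ρ < 1 ↔ c < ρ + (Real.log ρ - Real.log R) / τ := by
  rw [Cf, div_lt_one hρ]
  have hh : (Real.log ρ - Real.log R) / τ = -((Real.log R - Real.log ρ) / τ) := by ring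
  rw [hh]; constructor <;> intro h <;> linarith

lemma Cf_le_neg_one_iff (τ R c : ℝ) (hτ : 0 < τ) {ρ : ℝ} (hρ : 0 < ρ) :
    Cf τ R c ρ ≤ -1 ↔ c + (Real.log R - Real.log ρ) / τ ≤ -ρ := by
  rw [Cf, div_le_iff₀ hρ]
  constructor <;> intro h <;> nlinarith [h, hρ]

lemma pf_strictMono (τ R : ℝ) (hτ : 0 < τ) :
    StrictMonoOn (fun ρ => ρ + (Real.log ρ - Real.log R) / τ) (Ioi 0) := by
  intro x hx y hy hxy
  have hl := Real.log_lt_log hx hxy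
  have h2 : (Real.log x - Real.log R) / τ < (Real.log y - Real.log R) / τ :=
    (div_lt_div_iff_of_pos_right hτ).2 (by linarith)
  simpa using add_lt_add hxy h2

lemma exists_rho1 (τ R c : ℝ) (hτ : 0 < τ) (hR : 0 < R) (hc : c ≤ R) :
    ∃ ρ₁, 0 < ρ₁ ∧ ρ₁ ≤ R ∧ ρ₁ + (Real.log ρ₁ - Real.log R) / τ = c := by
  set f := fun ρ => ρ + (Real.log ρ - Real.log R) / τ with hf
  set ρs := R * Real.exp (τ * (c - R)) with hρs
  have hρs0 : 0 < ρs := by positivity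
  have hρsR : ρs ≤ R := by
    have : Real.exp (τ * (c - R)) ≤ 1 := Real.exp_le_one_iff.2 (by nlinarith)
    nlinarith
  have hfs : f ρs ≤ c := by
    have hlog : Real.log ρs = Real.log R + τ * (c - R) := by
      rw [hρs, Real.log_mul hR.ne' (Real.exp_ne_zero _), Real.log_exp]
    rw [hf]
    simp only [hlog]
    have : (Real.log R + τ * (c - R) - Real.log R) / τ = c - R := by field_simp; ring
    rw [this]
    linarith
  have hfR : c ≤ f R := by
    rw [hf]; simp
    linarith
  have hcont : ContinuousOn f (Icc ρs R) := by
    apply ContinuousOn.add continuousOn_id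
    apply ContinuousOn.div_const
    apply ContinuousOn.sub (Real.continuousOn_log.mono ?_) continuousOn_const
    intro x hx
    exact (lt_of_lt_of_le hρs0 hx.1).ne'
  have := intermediate_value_Icc hρsR hcont
  have hmem : c ∈ Icc (f ρs) (f R) := ⟨hfs, hfR⟩
  obtain ⟨ρ₁, hρ₁, hfρ₁⟩ := this hmem
  exact ⟨ρ₁, lt_of_lt_of_le hρs0 hρ₁.1, hρ₁.2, hfρ₁⟩


lemma Cf_rho1 (τ R c : ℝ) (hτ : 0 < τ) {ρ₁ : ℝ} (h0 : 0 < ρ₁)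
    (h1 : ρ₁ + (Real.log ρ₁ - Real.log R) / τ = c) : Cf τ R c ρ₁ = 1 := by
  rw [Cf, div_eq_one_iff_eq h0.ne']
  have hh : (Real.log R - Real.log ρ₁) / τ = -((Real.log ρ₁ - Real.log R) / τ) := by ring
  rw [hh]; linarith

lemma Gf_of_Cf_one {τ R c ρ : ℝ} (h : Cf τ R c ρ = 1) : Gf τ R c ρ = 0 := by
  simp [Gf, h]

lemma Gf_of_Cf_neg_one {τ R c ρ : ℝ} (h : Cf τ R c ρ = -1) : Gf τ R c ρ = π := by
  norm_num [Gf, h, Real.arccos_neg_one]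

lemma continuousAt_Cf (τ R c : ℝ) {ρ : ℝ} (hρ : 0 < ρ) : ContinuousAt (Cf τ R c) ρ := by
  apply ContinuousAt.div
  · exact continuousAt_const.add
      ((continuousAt_const.sub (Real.continuousAt_log hρ.ne')).div_const τ)
  · exact continuousAt_id
  · exact hρ.ne'

lemma exists_rho (τ R c A : ℝ) (hτ : 0 < τ) (hR : 0 < R) (hc : c ≤ R)
    (hA0 : 0 ≤ A) (hAπ : A ≤ π)
    (hAB : A ≤ Real.arccos (c / R) + τ * Real.sqrt (R ^ 2 - c ^ 2) ∨ c ≤ -R) :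
    ∃ ρ, 0 < ρ ∧ ρ ≤ R ∧ -1 ≤ Cf τ R c ρ ∧ Cf τ R c ρ ≤ 1 ∧ Gf τ R c ρ = A := by
  obtain ⟨ρ₁, hρ₁0, hρ₁R, hρ₁⟩ := exists_rho1 τ R c hτ hR hc
  have hC1 : Cf τ R c ρ₁ = 1 := Cf_rho1 τ R c hτ hρ₁0 hρ₁
  have hG1 : Gf τ R c ρ₁ = 0 := Gf_of_Cf_one hC1
  have hCle : ∀ ρ ∈ Icc ρ₁ R, Cf τ R c ρ ≤ 1 := by
    intro ρ hρ
    rw [Cf_le_one_iff τ R c hτ (lt_of_lt_of_le hρ₁0 hρ.1)]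
    calc c = ρ₁ + (Real.log ρ₁ - Real.log R) / τ := hρ₁.symm
      _ ≤ ρ + (Real.log ρ - Real.log R) / τ :=
        (pf_strictMono τ R hτ).monotoneOn (mem_Ioi.2 hρ₁0)
          (mem_Ioi.2 (lt_of_lt_of_le hρ₁0 hρ.1)) hρ.1
  by_cases hall : ∀ ρ ∈ Icc ρ₁ R, -1 ≤ Cf τ R c ρ
  · have hGR : A ≤ Gf τ R c R := by
      rcases hAB with h | h
      · rw [Gf_R τ R c hR]; exact h
      · have hCR : Cf τ R c R = -1 := by
          refine le_antisymm ?_ (hall R (right_mem_Icc.2 hρ₁R))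
          rw [Cf_R τ R c hR]
          rw [div_le_iff₀ hR]
          linarith
        rw [Gf_of_Cf_neg_one hCR]; exact hAπ
    have hsub := intermediate_value_Icc hρ₁R
      (continuousOn_Gf τ R c (fun x hx => (lt_of_lt_of_le hρ₁0 hx.1).ne'))
    obtain ⟨ρ, hρmem, hGρ⟩ := hsub (by rw [hG1]; exact ⟨hA0, hGR⟩)
    exact ⟨ρ, lt_of_lt_of_le hρ₁0 hρmem.1, hρmem.2, hall ρ hρmem, hCle ρ hρmem, hGρ⟩
  · push_neg at hall
    obtain ⟨ρ₂, hρ₂mem, hρ₂⟩ := hall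
    set S := Icc ρ₁ ρ₂ ∩ (Cf τ R c) ⁻¹' (Iic (-1)) with hS
    have hSne : S.Nonempty := ⟨ρ₂, ⟨hρ₂mem.1, le_refl _⟩, hρ₂.le⟩
    have hSbdd : BddBelow S := ⟨ρ₁, fun x hx => hx.1.1⟩
    have hSclosed : IsClosed S := by
      apply ContinuousOn.preimage_isClosed_of_isClosed
        (continuousOn_Cf τ R c (fun x hx => (lt_of_lt_of_le hρ₁0 hx.1).ne'))
        isClosed_Icc isClosed_Iic
    set ρ₃ := sInf S with hρ₃def
    have hρ₃S : ρ₃ ∈ S := hSclosed.csInf_mem hSne hSbdd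
    have hρ₃1 : ρ₁ ≤ ρ₃ := hρ₃S.1.1
    have hρ₃2 : ρ₃ ≤ ρ₂ := hρ₃S.1.2
    have hρ₃R : ρ₃ ≤ R := hρ₃2.trans hρ₂mem.2
    have hρ₃0 : 0 < ρ₃ := lt_of_lt_of_le hρ₁0 hρ₃1
    have hρ₃le : Cf τ R c ρ₃ ≤ -1 := hρ₃S.2
    have hρ₁lt : ρ₁ < ρ₃ := by
      rcases hρ₃1.lt_or_eq with h | h
      · exact h
      · exfalso; rw [← h] at hρ₃le; rw [hC1] at hρ₃le; linarith
    have hIco : ∀ ρ ∈ Ico ρ₁ ρ₃, -1 ≤ Cf τ R c ρ := by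
      intro ρ hρ
      by_contra h
      push_neg at h
      have : ρ ∈ S := ⟨⟨hρ.1, hρ.2.le.trans hρ₃2⟩, h.le⟩
      exact absurd (csInf_le hSbdd this) (not_le.2 hρ.2)
    have hCρ₃ : Cf τ R c ρ₃ = -1 := by
      refine le_antisymm hρ₃le ?_
      have ht : Filter.Tendsto (Cf τ R c) (nhdsWithin ρ₃ (Iio ρ₃)) (nhds (Cf τ R c ρ₃)) :=
        (continuousAt_Cf τ R c hρ₃0).tendsto.mono_left nhdsWithin_le_nhds
      refine ge_of_tendsto ht ?_
      filter_upwards [Ioo_mem_nhdsLT hρ₁lt] with ρ hρ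
      exact hIco ρ ⟨hρ.1.le, hρ.2⟩
    have hGρ₃ : Gf τ R c ρ₃ = π := Gf_of_Cf_neg_one hCρ₃
    have hsub := intermediate_value_Icc hρ₁lt.le
      (continuousOn_Gf τ R c (fun x hx => (lt_of_lt_of_le hρ₁0 hx.1).ne'))
    obtain ⟨ρ, hρmem, hGρ⟩ := hsub (by rw [hG1, hGρ₃]; exact ⟨hA0, hAπ⟩)
    refine ⟨ρ, lt_of_lt_of_le hρ₁0 hρmem.1, hρmem.2.trans hρ₃R, ?_,
      hCle ρ ⟨hρmem.1, hρmem.2.trans hρ₃R⟩, hGρ⟩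
    rcases hρmem.2.lt_or_eq with h | h
    · exact hIco ρ ⟨hρmem.1, h⟩
    · rw [h, hCρ₃]

lemma root_exists (a w : ℂ) (τ : ℝ) (hτ : 0 < τ) (hw : w ≠ 0)
    {ρ : ℝ} (hρ0 : 0 < ρ) (hρR : ρ ≤ ‖w‖)
    (hC1 : -1 ≤ Cf τ (‖w‖) a.re ρ) (hC2 : Cf τ (‖w‖) a.re ρ ≤ 1)
    (hG : Gf τ (‖w‖) a.re ρ = Real.arccos (Real.cos (τ * a.im + w.arg))) :
    ∃ z : ℂ, z + a - w * Complex.exp (-(τ : ℂ) * z) = 0 ∧ 0 ≤ z.re := by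
  set R := ‖w‖ with hRdef
  have hR : 0 < R := norm_pos_iff.mpr hw
  set c := a.re with hcdef
  set θ0 := τ * a.im + w.arg with hθ0
  set m := round (θ0 / (2 * π)) with hm
  set θ1 := θ0 - 2 * π * m with hθ1
  have hπ := Real.pi_pos
  have hθ1abs : |θ1| ≤ π := by
    have h := abs_sub_round (θ0 / (2 * π))
    have h3 : θ0 - 2 * π * m = 2 * π * (θ0 / (2 * π) - m) := by
      field_simp
    have h2 : |θ1| = 2 * π * |θ0 / (2 * π) - m| := by
      rw [hθ1, h3, abs_mul, abs_of_pos (by linarith : (0:ℝ) < 2 * π)]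
    rw [h2]
    nlinarith
  have hcosθ : Real.cos θ0 = Real.cos θ1 := by
    have h4 : θ0 = θ1 + (m : ℤ) * (2 * π) := by rw [hθ1]; push_cast; ring
    rw [h4, Real.cos_add_int_mul_two_pi]
  set A := Real.arccos (Real.cos θ0) with hA
  have hAθ1 : A = |θ1| := by
    rw [hA, hcosθ, arccos_cos_abs_le_pi θ1 (abs_le.1 hθ1abs).1 (abs_le.1 hθ1abs).2]
  set C := Cf τ R c ρ with hCdef
  have hsqrt_nonneg : 0 ≤ Real.sqrt (1 - C ^ 2) := Real.sqrt_nonneg _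
  obtain ⟨φ, hφcos, hφeq⟩ : ∃ φ, Real.cos φ = C ∧ φ + τ * (ρ * Real.sin φ) = θ1 := by
    have hGA : Real.arccos C + τ * (ρ * Real.sqrt (1 - C ^ 2)) = A := by
      rw [← hG, Gf]; ring
    rcases le_or_gt 0 θ1 with hσ | hσ
    · refine ⟨Real.arccos C, Real.cos_arccos hC1 hC2, ?_⟩
      rw [hAθ1, _root_.abs_of_nonneg hσ] at hGA
      rw [Real.sin_arccos]
      linarith
    · refine ⟨-Real.arccos C, by rw [Real.cos_neg]; exact Real.cos_arccos hC1 hC2, ?_⟩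
      rw [hAθ1, abs_of_neg hσ] at hGA
      rw [Real.sin_neg, Real.sin_arccos]
      linarith
  set x := (Real.log R - Real.log ρ) / τ with hxdef
  set y := ρ * Real.sin φ - a.im with hydef
  have hx0 : 0 ≤ x := by
    have hlog := Real.log_le_log hρ0 hρR
    rw [hxdef]
    apply div_nonneg (by linarith) hτ.le
  refine ⟨(x : ℂ) + (y : ℂ) * Complex.I, ?_, by simpa using hx0⟩
  set z := (x : ℂ) + (y : ℂ) * Complex.I with hzdef
  have hρC : ρ * C = x + c := by
    rw [hCdef, Cf, hxdef]
    field_simp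
    ring
  have hexpφ : Complex.exp ((φ : ℂ) * Complex.I) =
      (Real.cos φ : ℂ) + (Real.sin φ : ℂ) * Complex.I := by
    rw [Complex.exp_mul_I, Complex.ofReal_cos, Complex.ofReal_sin]
  have h1 : z + a = (ρ : ℂ) * Complex.exp ((φ : ℂ) * Complex.I) := by
    rw [hexpφ]
    apply Complex.ext
    · show (z + a).re = _
      simp only [hzdef, Complex.add_re, Complex.add_im, Complex.ofReal_re, Complex.mul_re,
        Complex.I_re, Complex.I_im, Complex.ofReal_im, Complex.mul_im]
      rw [hφcos]
      simp
      linarith [hρC]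
    · show (z + a).im = _
      simp only [hzdef, Complex.add_im, Complex.ofReal_im, Complex.mul_im, Complex.I_im,
        Complex.I_re, Complex.ofReal_re, Complex.add_re, Complex.mul_re]
      rw [hydef]
      simp
  have hτC : (R : ℂ) ≠ 0 := by exact_mod_cast hR.ne'
  have h2 : w * Complex.exp (-(τ : ℂ) * z) = (ρ : ℂ) * Complex.exp ((φ : ℂ) * Complex.I) := by
    have hzarg : -(τ : ℂ) * z = ((-(τ * x) : ℝ) : ℂ) + ((-(τ * y) : ℝ) : ℂ) * Complex.I := by
      rw [hzdef]; push_cast; ring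
    rw [hzarg, Complex.exp_add]
    have hreal : Complex.exp (((-(τ * x) : ℝ) : ℂ)) = ((Real.exp (-(τ * x)) : ℝ) : ℂ) := by
      rw [Complex.ofReal_exp]
    have hexpx : Real.exp (-(τ * x)) = ρ / R := by
      have h5 : -(τ * x) = Real.log ρ - Real.log R := by
        rw [hxdef]; field_simp; ring
      rw [h5, Real.exp_sub, Real.exp_log hρ0, Real.exp_log hR]
    have hw_eq : w = (R : ℂ) * Complex.exp ((w.arg : ℂ) * Complex.I) := by
      rw [hRdef]
      exact (Complex.norm_mul_exp_arg_mul_I w).symm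
    have harg : w.arg - τ * y = φ + (m : ℤ) * (2 * π) := by
      rw [hydef]
      push_cast
      linarith [hφeq, hθ1, hθ0]
    calc w * (Complex.exp ((((-(τ * x)) : ℝ) : ℂ)) * Complex.exp ((((-(τ * y)) : ℝ) : ℂ) * Complex.I))
        = (R : ℂ) * ((Real.exp (-(τ * x)) : ℝ) : ℂ) *
          (Complex.exp ((w.arg : ℂ) * Complex.I) * Complex.exp ((((-(τ * y)) : ℝ) : ℂ) * Complex.I)) := by
          rw [hreal]
          nth_rewrite 1 [hw_eq]
          ring
      _ = (ρ : ℂ) * Complex.exp (((w.arg - τ * y : ℝ) : ℂ) * Complex.I) := by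
          rw [hexpx, ← Complex.exp_add]
          congr 1
          · push_cast
            field_simp
          · push_cast; ring
      _ = (ρ : ℂ) * Complex.exp ((φ : ℂ) * Complex.I) := by
          congr 1
          rw [harg]
          push_cast
          rw [add_mul, Complex.exp_add]
          have h6 : ((m : ℤ) : ℂ) * (2 * (π : ℂ)) * Complex.I
              = ((m : ℤ) : ℂ) * (2 * (π : ℂ) * Complex.I) := by ring
          rw [h6, Complex.exp_int_mul_two_pi_mul_I, mul_one]
  rw [h1, h2]
  ring

lemma backward_ii (a w : ℂ) (τ : ℝ) (hτ : 0 < τ)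
    (hc1 : -(‖w‖) < a.re) (hc2 : a.re ≤ ‖w‖)
    (hAB : Real.arccos (a.re / ‖w‖)
        + τ * Real.sqrt ((‖w‖) ^ 2 - a.re ^ 2)
      < Real.arccos (Real.cos (τ * a.im + w.arg)))
    (z : ℂ) (hz : z + a - w * Complex.exp (-(τ : ℂ) * z) = 0) : z.re < 0 := by
  by_contra hx
  push_neg at hx
  set R := ‖w‖ with hRdef
  set c := a.re with hcdef
  have hR : 0 < R := by linarith
  have hw : w ≠ 0 := by
    intro h
    rw [h] at hRdef
    simp at hRdef
    rw [hRdef] at hR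
    exact lt_irrefl 0 hR
  set x := z.re with hxdef
  set y := z.im with hydef
  set u := z + a with hudef
  have hu : u = w * Complex.exp (-(τ : ℂ) * z) := by
    rw [hudef, ← sub_eq_zero]
    exact hz
  have hzre : (-(τ : ℂ) * z).re = -(τ * x) := by
    simp [hxdef]
  set ρ := ‖u‖ with hρdef
  have hρ : ρ = R * Real.exp (-(τ * x)) := by
    rw [hρdef, hu, norm_mul, Complex.norm_exp, hzre]
  have hρ0 : 0 < ρ := by rw [hρ]; positivity
  have hρR : ρ ≤ R := by
    rw [hρ]
    nth_rewrite 2 [← mul_one R]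
    apply mul_le_mul_of_nonneg_left _ hR.le
    rw [Real.exp_le_one_iff]
    nlinarith
  have hu0 : u ≠ 0 := by
    intro h
    rw [h] at hρdef
    simp at hρdef
    rw [hρdef] at hρ0
    exact lt_irrefl 0 hρ0
  have hlogρ : Real.log ρ = Real.log R - τ * x := by
    rw [hρ, Real.log_mul hR.ne' (Real.exp_ne_zero _), Real.log_exp]
    ring
  have hx_eq : x = (Real.log R - Real.log ρ) / τ := by
    rw [hlogρ]
    field_simp; ring
  set φ := u.arg with hφdef
  have hure : u.re = x + c := by rw [hudef]; simp [hxdef, hcdef]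
  have huim : u.im = y + a.im := by rw [hudef]; simp [hydef]
  have hcosφ : Real.cos φ = Cf τ R c ρ := by
    rw [hφdef, Complex.cos_arg hu0, Cf, ← hρdef, ← hx_eq, hure]
    ring_nf
  have hsinφ : ρ * Real.sin φ = y + a.im := by
    rw [hφdef, Complex.sin_arg, ← hρdef, ← huim]
    field_simp
  -- the mod-2π relation
  have hexp_eq : Complex.exp ((φ : ℂ) * Complex.I)
      = Complex.exp (((w.arg - τ * y : ℝ) : ℂ) * Complex.I) := by
    have hu_polar : (ρ : ℂ) * Complex.exp ((φ : ℂ) * Complex.I) = u := by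
      rw [hρdef, hφdef]; exact Complex.norm_mul_exp_arg_mul_I u
    have hzarg : -(τ : ℂ) * z = ((-(τ * x) : ℝ) : ℂ) + ((-(τ * y) : ℝ) : ℂ) * Complex.I := by
      apply Complex.ext <;> simp [hxdef, hydef]
    have hw_eq : w = (R : ℂ) * Complex.exp ((w.arg : ℂ) * Complex.I) := by
      rw [hRdef]; exact (Complex.norm_mul_exp_arg_mul_I w).symm
    have hrhs : w * Complex.exp (-(τ : ℂ) * z)
        = (ρ : ℂ) * Complex.exp (((w.arg - τ * y : ℝ) : ℂ) * Complex.I) := by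
      rw [hzarg, Complex.exp_add]
      nth_rewrite 1 [hw_eq]
      rw [← Complex.ofReal_exp]
      have hρc : (ρ : ℂ) = (R : ℂ) * ((Real.exp (-(τ * x)) : ℝ) : ℂ) := by
        rw [hρ]; push_cast; ring
      rw [hρc]
      have hcomb : Complex.exp ((w.arg : ℂ) * Complex.I) * Complex.exp (((-(τ * y) : ℝ) : ℂ) * Complex.I)
          = Complex.exp (((w.arg - τ * y : ℝ) : ℂ) * Complex.I) := by
        rw [← Complex.exp_add]; congr 1; push_cast; ring
      rw [← hcomb]
      ring
    have := hu_polar.trans (hu.trans hrhs)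
    exact mul_left_cancel₀ (by exact_mod_cast hρ0.ne') this
  obtain ⟨n, hn⟩ := Complex.exp_eq_exp_iff_exists_int.1 hexp_eq
  have hφeq : φ = w.arg - τ * y + n * (2 * π) := by
    have him := congrArg Complex.im hn
    simpa using him
  set θ0 := τ * a.im + w.arg with hθ0
  have hcosθ : Real.cos θ0 = Real.cos (φ + τ * (ρ * Real.sin φ)) := by
    have h7 : θ0 = (φ + τ * (ρ * Real.sin φ)) + (-n : ℤ) * (2 * π) := by
      rw [hsinφ]
      push_cast
      linarith [hφeq]
    rw [h7, Real.cos_add_int_mul_two_pi]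
  set A := Real.arccos (Real.cos θ0) with hA
  have hAle : A ≤ Gf τ R c ρ := by
    have h8 : A ≤ |φ + τ * (ρ * Real.sin φ)| := by
      rw [hA, hcosθ]
      exact arccos_cos_le_abs _
    have h9 : |φ + τ * (ρ * Real.sin φ)| ≤ |φ| + τ * (ρ * |Real.sin φ|) := by
      calc |φ + τ * (ρ * Real.sin φ)| ≤ |φ| + |τ * (ρ * Real.sin φ)| := abs_add_le _ _
        _ = |φ| + τ * (ρ * |Real.sin φ|) := by
            rw [abs_mul, abs_mul, abs_of_pos hτ, abs_of_pos hρ0]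
    have h10 : |φ| = Real.arccos (Cf τ R c ρ) := by
      rw [← hcosφ, arccos_cos_abs_le_pi φ (Complex.neg_pi_lt_arg u).le (Complex.arg_le_pi u)]
    have h11 : |Real.sin φ| = Real.sqrt (1 - Cf τ R c ρ ^ 2) := by
      rw [← hcosφ]
      rw [show (1 : ℝ) - Real.cos φ ^ 2 = Real.sin φ ^ 2 by
        have := Real.sin_sq_add_cos_sq φ; linarith]
      exact (Real.sqrt_sq_eq_abs _).symm
    have h12 := h8.trans h9
    rw [h10, h11] at h12
    rw [Gf]
    linarith
  have hπ := Real.pi_pos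
  have hAπ : A ≤ π := Real.arccos_le_pi _
  have hnodip : ∀ ρ' ∈ Ioo (0:ℝ) R, -1 < Cf τ R c ρ' := by
    intro ρ' hmem
    by_contra hle
    push_neg at hle
    rw [Cf_le_neg_one_iff τ R c hτ hmem.1] at hle
    set x' := (Real.log R - Real.log ρ') / τ with hx'def
    have hx'0 : 0 < x' := by
      have := Real.log_lt_log hmem.1 hmem.2
      apply div_pos (by linarith) hτ
    have hρ'x : R * Real.exp (-(τ * x')) = ρ' := by
      have h13 : -(τ * x') = Real.log ρ' - Real.log R := by rw [hx'def]; field_simp; ring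
      rw [h13, Real.exp_sub, Real.exp_log hmem.1, Real.exp_log hR]
      field_simp
    have hdip : R * Real.exp (-(τ * x')) + x' + c ≤ 0 := by
      rw [hρ'x]
      have : c + x' ≤ -ρ' := by rw [hx'def]; linarith [hle]
      linarith
    have := dip_pi_le τ R c hτ hR hc1 x' hx'0 hdip
    linarith
  have hC1 : -1 ≤ Cf τ R c ρ := by rw [← hcosφ]; exact Real.neg_one_le_cos φ
  have hC2 : Cf τ R c ρ ≤ 1 := by rw [← hcosφ]; exact Real.cos_le_one φ
  obtain ⟨ρ₁, hρ₁0, hρ₁R, hρ₁⟩ := exists_rho1 τ R c hτ hR hc2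
  have hρ₁ρ : ρ₁ ≤ ρ := by
    by_contra h
    push_neg at h
    have hlt : ρ + (Real.log ρ - Real.log R) / τ < ρ₁ + (Real.log ρ₁ - Real.log R) / τ :=
      pf_strictMono τ R hτ (mem_Ioi.2 hρ0) (mem_Ioi.2 hρ₁0) h
    rw [hρ₁] at hlt
    rw [Cf_le_one_iff τ R c hτ hρ0] at hC2
    linarith
  have hmono := Gf_monoOn τ R c hτ hρ₁0 hρ₁R (fun ρ' hmem => by
    constructor
    · exact hnodip ρ' ⟨lt_of_lt_of_le hρ₁0 hmem.1.le, hmem.2⟩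
    · rw [Cf_lt_one_iff τ R c hτ (hρ₁0.trans hmem.1), ← hρ₁]
      exact pf_strictMono τ R hτ (mem_Ioi.2 hρ₁0) (mem_Ioi.2 (hρ₁0.trans hmem.1)) hmem.1)
  have hGle : Gf τ R c ρ ≤ Gf τ R c R :=
    hmono ⟨hρ₁ρ, hρR⟩ ⟨hρ₁R, le_refl R⟩ hρR
  rw [Gf_R τ R c hR] at hGle
  linarith

end StabAux


/-- Stability criterion for `z + a − w e^{−τz} = 0` with complex `a, w`: all roots have
negative real parts iff either `Re a > |w|`, or `−|w| < Re a ≤ |w|` and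
`arccos(cos(τ Im a + Arg w)) > arccos(Re a / |w|) + τ √(|w|² − (Re a)²)`. -/
theorem stability_complex_coefficients (a w : ℂ) (τ : ℝ) (hτ : 0 < τ) :
    (∀ z : ℂ, z + a - w * Complex.exp (-(τ : ℂ) * z) = 0 → z.re < 0) ↔
      (a.re > ‖w‖ ∨
        (-‖w‖ < a.re ∧ a.re ≤ ‖w‖ ∧
          Real.arccos (Real.cos (τ * a.im + w.arg)) >
            Real.arccos (a.re / ‖w‖) +
              τ * Real.sqrt ((‖w‖) ^ 2 - a.re ^ 2))) := by
  constructor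
  · intro hstab
    by_cases hw : w = 0
    · left
      have h0 : (-a) + a - w * Complex.exp (-(τ : ℂ) * (-a)) = 0 := by
        rw [hw]; ring
      have hlt := hstab (-a) h0
      rw [hw]
      simp only [Complex.neg_re, map_zero, norm_zero] at hlt ⊢
      linarith
    · have hR : 0 < ‖w‖ := norm_pos_iff.mpr hw
      set R := ‖w‖ with hRdef
      set c := a.re with hcdef
      by_cases hcR : R < c
      · left; exact hcR
      push_neg at hcR
      right
      set A := Real.arccos (Real.cos (τ * a.im + w.arg)) with hA
      set B := Real.arccos (c / R) + τ * Real.sqrt (R ^ 2 - c ^ 2) with hB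
      by_cases hcond : -R < c ∧ B < A
      · exact ⟨hcond.1, hcR, hcond.2⟩
      · exfalso
        have hdisj : A ≤ Real.arccos (c / R) + τ * Real.sqrt (R ^ 2 - c ^ 2) ∨ c ≤ -R := by
          by_cases h1 : -R < c
          · left
            by_contra h2
            push_neg at h2
            rw [← hB] at h2
            exact hcond ⟨h1, h2⟩
          · right; linarith [not_lt.1 h1]
        obtain ⟨ρ, hρ0, hρR, hC1, hC2, hG⟩ := StabAux.exists_rho τ R c A hτ hR hcR
          (Real.arccos_nonneg _) (Real.arccos_le_pi _) hdisj
        obtain ⟨z, hz, hzre⟩ := StabAux.root_exists a w τ hτ hw hρ0 hρR hC1 hC2 hG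
        exact absurd (hstab z hz) (not_lt.2 hzre)
  · rintro (hcase | ⟨hc1, hc2, hAB⟩) z hz
    · by_contra hx
      push_neg at hx
      have hu : z + a = w * Complex.exp (-(τ : ℂ) * z) := by
        rw [← sub_eq_zero]; exact hz
      have h2 : (-(τ : ℂ) * z).re = -(τ * z.re) := by simp
      have habs : ‖(z + a)‖ = ‖w‖ * Real.exp (-(τ * z.re)) := by
        rw [hu, norm_mul, Complex.norm_exp, h2]
      have h3 : ‖(z + a)‖ ≤ ‖w‖ := by
        rw [habs]
        nth_rewrite 2 [← mul_one (‖w‖)]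
        exact mul_le_mul_of_nonneg_left
          (Real.exp_le_one_iff.2 (by nlinarith)) (norm_nonneg w)
      have h4 : z.re + a.re ≤ ‖(z + a)‖ := by
        have h5 := Complex.re_le_norm (z + a)
        simpa using h5
      linarith
    · exact StabAux.backward_ii a w τ hτ hc1 hc2 hAB z hz
end

section
/- Let ψ ∈ (−π, π], τ > 0, a ∈ ℝ, w ∈ ℂ with w ≠ 0 and Re(w) < a < |w|, and s > 0. Define I_c(ψ) := (0, ψ) if ψ ≥ 0 and I_c(ψ) := (ψ, 0) if ψ < 0 (so I_c(0) is empty). Then the following are equivalent: (i) there exists Ω ∈ ℝ with τ·Ω ∈ I_c(ψ), s·a = −Ω·cot(τ·Ω − ψ), and s·w = (−Ω/sin(τ·Ω − ψ))·exp(i·ψ); (ii) s·τ = τ_c(a,w) and Arg(w) = ψ. -/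
lemma polar_aux {s ρ : ℝ} (hs : 0 < s) (hρ : 0 < ρ) (w : ℂ) {ψ : ℝ}
    (hψ : ψ ∈ Set.Ioc (-Real.pi) Real.pi) :
    (s : ℂ) * w = (ρ : ℂ) * Complex.exp (Complex.I * (ψ : ℂ)) ↔
      s * ‖w‖ = ρ ∧ w.arg = ψ := by
  have hexp : Complex.exp (Complex.I * (ψ : ℂ))
      = Complex.cos (ψ : ℂ) + Complex.sin (ψ : ℂ) * Complex.I := by
    rw [mul_comm, Complex.exp_mul_I]
  constructor
  · intro h
    have habs : s * ‖w‖ = ρ := by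
      have h2 := congrArg (‖·‖) h
      rw [norm_mul, norm_mul, Complex.norm_exp] at h2
      simpa [Complex.norm_real, Real.norm_eq_abs, abs_of_pos hs, abs_of_pos hρ, Complex.mul_re] using h2
    refine ⟨habs, ?_⟩
    have h3 := congrArg Complex.arg h
    rw [Complex.arg_real_mul w hs, hexp, Complex.arg_real_mul _ hρ,
      Complex.arg_cos_add_sin_mul_I hψ] at h3
    exact h3
  · rintro ⟨h1, h2⟩
    conv_lhs => rw [← Complex.norm_mul_exp_arg_mul_I w]
    rw [h2, mul_comm ((ψ : ℂ)) Complex.I, ← h1]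
    push_cast
    ring

/-- Correspondence between the curve `Γ_c(ψ; τ)` parametrized by the angular frequency and
the critical delay: `(s a, s w)` lies on `Γ_c(ψ; τ)` iff `s τ = τ_c(a, w)` and `Arg w = ψ`. -/
theorem gamma_c_correspondence (ψ : ℝ) (hψ : ψ ∈ Set.Ioc (-Real.pi) Real.pi)
    (τ : ℝ) (hτ : 0 < τ) (a : ℝ) (w : ℂ) (hw : w ≠ 0)
    (h₁ : w.re < a) (h₂ : a < ‖w‖) (s : ℝ) (hs : 0 < s) :
    (∃ Ω : ℝ, τ * Ω ∈ (if 0 ≤ ψ then Set.Ioo 0 ψ else Set.Ioo ψ 0) ∧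
        s * a = -Ω * Real.cot (τ * Ω - ψ) ∧
        (s : ℂ) * w = ((-Ω / Real.sin (τ * Ω - ψ) : ℝ) : ℂ) *
          Complex.exp (Complex.I * (ψ : ℂ))) ↔
      (s * τ = (|w.arg| - Real.arccos (a / ‖w‖)) /
          Real.sqrt ((‖w‖) ^ 2 - a ^ 2) ∧ w.arg = ψ) := by
  set r := ‖w‖ with hr_def
  have hr : 0 < r := norm_pos_iff.mpr hw
  have hra : -r < a := by
    have := abs_le.mp (Complex.abs_re_le_norm w)
    linarith [this.1]
  have hc1 : (-1 : ℝ) < a / r := by rw [lt_div_iff₀ hr]; linarith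
  have hc2 : a / r < 1 := by rw [div_lt_one hr]; exact h₂
  have hq2 : 0 < r ^ 2 - a ^ 2 := by nlinarith
  set q := Real.sqrt (r ^ 2 - a ^ 2) with hq_def
  have hq : 0 < q := Real.sqrt_pos.mpr hq2
  have hqsq : q ^ 2 = r ^ 2 - a ^ 2 := Real.sq_sqrt hq2.le
  set φ := Real.arccos (a / r) with hφ_def
  have hφ0 : 0 < φ := Real.arccos_pos.mpr hc2
  have hcosφ : Real.cos φ = a / r := Real.cos_arccos hc1.le hc2.le
  have hφπ : φ < Real.pi := by
    rcases lt_or_eq_of_le (Real.arccos_le_pi (a / r)) with h | h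
    · exact h
    · rw [hφ_def, h] at hcosφ
      rw [Real.cos_pi] at hcosφ
      linarith
  have hsinφ : Real.sin φ = q / r := by
    rw [hφ_def, Real.sin_arccos, show 1 - (a / r) ^ 2 = (r ^ 2 - a ^ 2) / r ^ 2 by
      field_simp, Real.sqrt_div hq2.le, Real.sqrt_sq hr.le]
  constructor
  · rintro ⟨Ω, hmem, heq1, heq2⟩
    set θ := τ * Ω - ψ with hθ_def
    by_cases hψ0 : 0 ≤ ψ
    · rw [if_pos hψ0] at hmem
      obtain ⟨hΩ1, hΩ2⟩ := hmem
      have hψpos : 0 < ψ := lt_trans hΩ1 hΩ2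
      have hθ1 : -Real.pi < θ := by have := hψ.2; simp only [hθ_def]; linarith
      have hθ2 : θ < 0 := by simp only [hθ_def]; linarith
      have hsinθ : Real.sin θ < 0 := Real.sin_neg_of_neg_of_neg_pi_lt hθ2 hθ1
      have hΩpos : 0 < Ω := by
        by_contra h
        push_neg at h
        have := mul_nonpos_of_nonneg_of_nonpos hτ.le h
        linarith
      have hρ : 0 < -Ω / Real.sin θ := div_pos_of_neg_of_neg (by linarith) hsinθ
      rw [polar_aux hs hρ w hψ] at heq2
      obtain ⟨habs, harg⟩ := heq2
      rw [← hr_def] at habs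
      have hcosθ : Real.cos θ = a / r := by
        have h1 : s * a = (-Ω / Real.sin θ) * Real.cos θ := by
          rw [heq1, Real.cot_eq_cos_div_sin]; ring
        rw [← habs] at h1
        rw [eq_div_iff hr.ne']
        have h2 : s * (Real.cos θ * r) = s * a := by linear_combination -h1
        exact mul_left_cancel₀ hs.ne' h2
      have hφθ : φ = -θ := by
        rw [hφ_def, ← hcosθ, ← Real.cos_neg, Real.arccos_cos (by linarith) (by linarith)]
      have hsinθ' : Real.sin θ = -(q / r) := by
        have h5 := hsinφ
        rw [hφθ, Real.sin_neg] at h5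
        linarith
      have hsq : s * q = Ω := by
        rw [eq_div_iff (ne_of_lt hsinθ), hsinθ'] at habs
        have h9 : s * r * -(q / r) = -(s * q) := by field_simp
        linarith
      refine ⟨?_, harg⟩
      rw [harg, abs_of_pos hψpos, eq_div_iff hq.ne']
      have : φ = ψ - τ * Ω := by rw [hφθ]; simp [hθ_def]
      rw [this]
      linear_combination τ * hsq
    · rw [if_neg hψ0] at hmem
      push_neg at hψ0
      obtain ⟨hΩ1, hΩ2⟩ := hmem
      have hθ1 : 0 < θ := by simp only [hθ_def]; linarith
      have hθ2 : θ < Real.pi := by have := hψ.1; simp only [hθ_def]; linarith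
      have hsinθ : 0 < Real.sin θ := Real.sin_pos_of_pos_of_lt_pi hθ1 hθ2
      have hΩneg : Ω < 0 := by
        by_contra h
        push_neg at h
        have := mul_nonneg hτ.le h
        linarith
      have hρ : 0 < -Ω / Real.sin θ := div_pos (by linarith) hsinθ
      rw [polar_aux hs hρ w hψ] at heq2
      obtain ⟨habs, harg⟩ := heq2
      rw [← hr_def] at habs
      have hcosθ : Real.cos θ = a / r := by
        have h1 : s * a = (-Ω / Real.sin θ) * Real.cos θ := by
          rw [heq1, Real.cot_eq_cos_div_sin]; ring
        rw [← habs] at h1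
        rw [eq_div_iff hr.ne']
        have h2 : s * (Real.cos θ * r) = s * a := by linear_combination -h1
        exact mul_left_cancel₀ hs.ne' h2
      have hφθ : φ = θ := by
        rw [hφ_def, ← hcosθ, Real.arccos_cos hθ1.le hθ2.le]
      have hsinθ' : Real.sin θ = q / r := by rw [← hφθ]; exact hsinφ
      have hsq : s * q = -Ω := by
        rw [eq_div_iff (ne_of_gt hsinθ), hsinθ'] at habs
        have h9 : s * r * (q / r) = s * q := by field_simp
        linarith
      refine ⟨?_, harg⟩
      rw [harg, abs_of_neg hψ0, eq_div_iff hq.ne']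
      have : φ = τ * Ω - ψ := by rw [hφθ]
      rw [this]
      linear_combination τ * hsq
  · rintro ⟨hT, harg⟩
    have hcarg : Real.cos ψ < a / r := by
      rw [← harg, Complex.cos_arg hw]
      exact (div_lt_div_iff_of_pos_right hr).mpr h₁
    have hψne : ψ ≠ 0 := by
      intro h
      rw [h, Real.cos_zero] at hcarg
      linarith
    by_cases hψ0 : 0 ≤ ψ
    · have hψpos : 0 < ψ := lt_of_le_of_ne hψ0 (Ne.symm hψne)
      have hφψ : φ < ψ := by
        by_contra h
        push_neg at h
        have h6 : Real.cos φ ≤ Real.cos ψ :=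
          Real.cos_le_cos_of_nonneg_of_le_pi hψpos.le hφπ.le h
        rw [hcosφ] at h6
        linarith
      rw [harg, abs_of_pos hψpos] at hT
      have hτΩ : τ * (s * q) = ψ - φ := by
        rw [eq_div_iff hq.ne'] at hT
        linear_combination hT
      refine ⟨s * q, ?_, ?_, ?_⟩
      · rw [if_pos hψ0, hτΩ]
        exact ⟨by linarith, by linarith⟩
      · rw [show τ * (s * q) - ψ = -φ by rw [hτΩ]; ring,
          Real.cot_eq_cos_div_sin, Real.cos_neg, Real.sin_neg, hcosφ, hsinφ]
        field_simp
      · rw [show τ * (s * q) - ψ = -φ by rw [hτΩ]; ring, Real.sin_neg, hsinφ,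
          show -(s * q) / -(q / r) = s * r by field_simp]
        exact (polar_aux hs (mul_pos hs hr) w hψ).mpr ⟨rfl, harg⟩
    · push_neg at hψ0
      have hφψ : φ < -ψ := by
        by_contra h
        push_neg at h
        have h6 : Real.cos φ ≤ Real.cos (-ψ) :=
          Real.cos_le_cos_of_nonneg_of_le_pi (by linarith) hφπ.le h
        rw [hcosφ, Real.cos_neg] at h6
        linarith
      rw [harg, abs_of_neg hψ0] at hT
      have hτΩ : τ * (s * -q) = ψ + φ := by
        rw [eq_div_iff hq.ne'] at hT
        linear_combination -hT
      refine ⟨s * -q, ?_, ?_, ?_⟩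
      · rw [if_neg (not_le.mpr hψ0), hτΩ]
        exact ⟨by linarith, by linarith⟩
      · rw [show τ * (s * -q) - ψ = φ by rw [hτΩ]; ring,
          Real.cot_eq_cos_div_sin, hcosφ, hsinφ]
        field_simp
      · rw [show τ * (s * -q) - ψ = φ by rw [hτΩ]; ring, hsinφ,
          show -(s * -q) / (q / r) = s * r by field_simp]
        exact (polar_aux hs (mul_pos hs hr) w hψ).mpr ⟨rfl, harg⟩
end
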